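/- Let G be a topological group admitting a functorial embedding j : [0,1] → G, and let ℐ be a usual Cantor scheme with J_∅ = [0,1]. Then for every n ∈ ℕ, the map z_n : [0,1] → G (sending 0 to the identity and ξ > 0 to the alternating product of endpoints of ℐ_{n,ξ}) is a topological embedding. -/

import Mathlib

open Set Topology Filter

/-- A usual Cantor scheme, given by the endpoint functions of the intervals
`J_s = [a s, b s]`, indexed by finite binary sequences (lists of booleans),
where `s ++ [false]` is `s⌢0` and `s ++ [true]` is `s⌢1`. -/
structure CantorScheme where
  a : List Bool → ℝ
  b : List Bool → ℝ
  left_min : ∀ s, a (s ++ [false]) = a s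
  right_max : ∀ s, b (s ++ [true]) = b s
  lt1 : ∀ s, a (s ++ [false]) < b (s ++ [false])
  lt2 : ∀ s, b (s ++ [false]) < a (s ++ [true])
  lt3 : ∀ s, a (s ++ [true]) < b (s ++ [true])
  diam_tendsto : ∀ f : ℕ → Bool,
    Filter.Tendsto (fun n => b (List.ofFn fun i : Fin n => f i) - a (List.ofFn fun i : Fin n => f i))
      Filter.atTop (nhds 0)

/-- For `ξ ∈ (0,1]`, the unique `k` with `3^{-(k+1)} < ξ ≤ 3^{-k}`. -/
noncomputable def scaleIndex (ξ : ℝ) : ℕ := ⌊-Real.logb 3 ξ⌋₊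

/-- The piecewise linear map `left_s : [0,1] → J_s` with `left_s 0 = min J_s`,
`left_s (1/3^k) = max J_{s⌢0^{k+1}}`, linear on each `[1/3^{k+1}, 1/3^k]`. -/
noncomputable def CantorScheme.leftMap (C : CantorScheme) (s : List Bool) (ξ : ℝ) : ℝ :=
  if ξ ≤ 0 then C.a s
  else
    let k := scaleIndex ξ
    let x0 : ℝ := (3:ℝ)⁻¹ ^ (k + 1)
    let x1 : ℝ := (3:ℝ)⁻¹ ^ k
    let y0 := C.b (s ++ List.replicate (k + 2) false)
    let y1 := C.b (s ++ List.replicate (k + 1) false)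
    y0 + (ξ - x0) / (x1 - x0) * (y1 - y0)

/-- The piecewise linear map `right_s : [0,1] → J_s` with `right_s 0 = max J_s`,
`right_s (1/3^k) = min J_{s⌢1^{k+1}}`, linear on each `[1/3^{k+1}, 1/3^k]`. -/
noncomputable def CantorScheme.rightMap (C : CantorScheme) (s : List Bool) (ξ : ℝ) : ℝ :=
  if ξ ≤ 0 then C.b s
  else
    let k := scaleIndex ξ
    let x0 : ℝ := (3:ℝ)⁻¹ ^ (k + 1)
    let x1 : ℝ := (3:ℝ)⁻¹ ^ k
    let y0 := C.a (s ++ List.replicate (k + 2) true)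
    let y1 := C.a (s ++ List.replicate (k + 1) true)
    y0 + (ξ - x0) / (x1 - x0) * (y1 - y0)

/-- The set `∂ℐ_{n,ξ}` of endpoints of the intervals
`left_s([0,ξ]) = [min J_s, left_s ξ]` and `right_s([0,ξ]) = [right_s ξ, max J_s]`,
for `s` ranging over binary sequences of length `n`. -/
noncomputable def CantorScheme.boundary (C : CantorScheme) (n : ℕ) (ξ : ℝ) : Finset ℝ :=
  Finset.image
    (fun p : (Fin n → Bool) × Fin 4 =>
      ![C.a (List.ofFn p.1), C.leftMap (List.ofFn p.1) ξ,
        C.rightMap (List.ofFn p.1) ξ, C.b (List.ofFn p.1)] p.2)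
    Finset.univ

/-- Alternating product `j x₁^{±1} j x₂^{∓1} ⋯` along a list, starting with the sign
given by the boolean (`false` = inverse first). -/
def altProd {G : Type*} [Group G] (j : ℝ → G) : Bool → List ℝ → G
  | _, [] => 1
  | sgn, x :: l => (if sgn then j x else (j x)⁻¹) * altProd j (!sgn) l

/-- `π₋(X) = j x₁⁻¹ · j x₂ · j x₃⁻¹ ⋯` where `x₁ < x₂ < ⋯` enumerates the finite set `X`. -/
noncomputable def piMinus {G : Type*} [Group G] (j : ℝ → G) (X : Finset ℝ) : G :=
  altProd j false (X.sort (· ≤ ·))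

/-- The map `z_n : [0,1] → G`, `z_n 0 = e`, `z_n ξ = π₋(∂ℐ_{n,ξ})` for `ξ > 0`. -/
noncomputable def CantorScheme.z {G : Type*} [Group G] (C : CantorScheme) (j : ℝ → G)
    (n : ℕ) (ξ : ℝ) : G :=
  if ξ ≤ 0 then 1 else piMinus j (C.boundary n ξ)

/-- `j` is a functorial embedding of `[0,1]` into the topological group `G`:
a topological embedding of `[0,1]` such that every autohomeomorphism `h` of `[0,1]`
extends to a continuous group homomorphism `H : G → G` with `H ∘ j = j ∘ h`. -/
def FunctorialEmbedding {G : Type*} [Group G] [TopologicalSpace G] (j : ℝ → G) : Prop :=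
  Topology.IsEmbedding ((Set.Icc (0:ℝ) 1).restrict j) ∧
  ∀ h : Set.Icc (0:ℝ) 1 ≃ₜ Set.Icc (0:ℝ) 1,
    ∃ H : G →* G, Continuous H ∧ ∀ x : Set.Icc (0:ℝ) 1, H (j x) = j (h x)


namespace CantorScheme
variable (C : CantorScheme)

lemma a_lt_b (hab : C.a [] < C.b []) (s : List Bool) : C.a s < C.b s := by
  induction s using List.reverseRecOn with
  | nil => exact hab
  | append_singleton t i _ => cases i
                              · exact C.lt1 t
                              · exact C.lt3 t

lemma a_le_a_append (s t : List Bool) : C.a s ≤ C.a (s ++ t) := by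
  induction t using List.reverseRecOn with
  | nil => simp
  | append_singleton w i ih =>
      rw [← List.append_assoc]
      cases i
      · rw [C.left_min]; exact ih
      · refine ih.trans (le_of_lt ?_)
        calc C.a (s ++ w) = C.a ((s ++ w) ++ [false]) := (C.left_min _).symm
        _ < C.b ((s ++ w) ++ [false]) := C.lt1 _
        _ < C.a ((s ++ w) ++ [true]) := C.lt2 _

lemma b_append_le (s t : List Bool) : C.b (s ++ t) ≤ C.b s := by
  induction t using List.reverseRecOn with
  | nil => simp
  | append_singleton w i ih =>
      rw [← List.append_assoc]
      cases i
      · refine (le_of_lt ?_).trans ih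
        calc C.b ((s ++ w) ++ [false]) < C.a ((s ++ w) ++ [true]) := C.lt2 _
        _ < C.b ((s ++ w) ++ [true]) := C.lt3 _
        _ = C.b (s ++ w) := C.right_max _
      · rw [C.right_max]; exact ih

lemma a_append_replicate_false (s : List Bool) (k : ℕ) :
    C.a (s ++ List.replicate k false) = C.a s := by
  induction k with
  | zero => simp
  | succ k ih => rw [List.replicate_succ', ← List.append_assoc, C.left_min, ih]

lemma b_append_replicate_true (s : List Bool) (k : ℕ) :
    C.b (s ++ List.replicate k true) = C.b s := by
  induction k with
  | zero => simp
  | succ k ih => rw [List.replicate_succ', ← List.append_assoc, C.right_max, ih]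

lemma beta_lt (s : List Bool) (k : ℕ) :
    C.b (s ++ List.replicate (k+1) false) < C.b (s ++ List.replicate k false) := by
  rw [List.replicate_succ', ← List.append_assoc]
  calc C.b ((s ++ List.replicate k false) ++ [false])
      < C.a ((s ++ List.replicate k false) ++ [true]) := C.lt2 _
    _ < C.b ((s ++ List.replicate k false) ++ [true]) := C.lt3 _
    _ = C.b (s ++ List.replicate k false) := C.right_max _

lemma beta_anti (s : List Bool) :
    StrictAnti (fun k => C.b (s ++ List.replicate k false)) :=
  strictAnti_nat_of_succ_lt fun k => C.beta_lt s k

lemma a_lt_beta (hab : C.a [] < C.b []) (s : List Bool) (k : ℕ) :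
    C.a s < C.b (s ++ List.replicate k false) := by
  have := C.a_lt_b hab (s ++ List.replicate k false)
  rwa [C.a_append_replicate_false] at this

lemma tendsto_beta (s : List Bool) :
    Tendsto (fun k => C.b (s ++ List.replicate k false)) atTop (nhds (C.a s)) := by
  set f : ℕ → Bool := fun i => s.getD i false with hf
  have key : ∀ m, s.length ≤ m →
      (List.ofFn fun i : Fin m => f i) = s ++ List.replicate (m - s.length) false := by
    intro m hm
    apply List.ext_getElem (by simp [Nat.add_sub_cancel' hm])
    intro i h1 h2
    simp only [List.getElem_ofFn, List.getElem_append, hf]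
    by_cases hi : i < s.length
    · simp [hi, List.getD_eq_getElem s false hi]
    · rw [List.getD_eq_getElem?_getD, List.getElem?_eq_none (le_of_not_gt hi)]
      simp [hi]
  have h2 := (C.diam_tendsto f).comp (tendsto_add_atTop_nat s.length)
  have h3 : (fun k => C.b (s ++ List.replicate k false) - C.a s) =
      (fun m => C.b (List.ofFn fun i : Fin m => f i) - C.a (List.ofFn fun i : Fin m => f i)) ∘
        (fun k => k + s.length) := by
    funext k
    simp only [Function.comp]
    rw [key (k + s.length) (by omega), Nat.add_sub_cancel, C.a_append_replicate_false]
  have h4 : Tendsto (fun k => C.b (s ++ List.replicate k false) - C.a s) atTop (nhds 0) := by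
    rw [h3]; exact h2
  have h5 := h4.add_const (C.a s)
  simpa using h5


end CantorScheme

lemma inv3_pow_eq_rpow (k : ℕ) : (3:ℝ)⁻¹ ^ k = (3:ℝ) ^ (-(k:ℝ)) := by
  rw [Real.rpow_neg (by norm_num), Real.rpow_natCast, inv_pow]

lemma scaleIndex_spec {ξ : ℝ} (h0 : 0 < ξ) (h1 : ξ ≤ 1) :
    (3:ℝ)⁻¹ ^ (scaleIndex ξ + 1) < ξ ∧ ξ ≤ (3:ℝ)⁻¹ ^ scaleIndex ξ := by
  have h3 : (1:ℝ) < 3 := by norm_num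
  have hy : Real.logb 3 ξ ≤ 0 := Real.logb_nonpos (by norm_num) h0.le h1
  obtain ⟨k, hk⟩ : ∃ k : ℕ, scaleIndex ξ = k := ⟨_, rfl⟩
  have hk1 : (k : ℝ) ≤ -Real.logb 3 ξ := by
    rw [← hk]; exact Nat.floor_le (by linarith)
  have hk2 : -Real.logb 3 ξ < k + 1 := by
    rw [← hk]; exact Nat.lt_floor_add_one _
  have hξ : (3:ℝ) ^ Real.logb 3 ξ = ξ := Real.rpow_logb (by norm_num) (by norm_num) h0
  rw [hk]
  constructor
  · rw [inv3_pow_eq_rpow]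
    calc (3:ℝ) ^ (-((k+1:ℕ):ℝ)) < 3 ^ Real.logb 3 ξ := by
          apply Real.rpow_lt_rpow_left_iff h3 |>.mpr; push_cast; linarith
      _ = ξ := hξ
  · calc ξ = (3:ℝ) ^ Real.logb 3 ξ := hξ.symm
      _ ≤ (3:ℝ) ^ (-(k:ℝ)) := by
          apply Real.rpow_le_rpow_left_iff h3 |>.mpr; linarith
      _ = (3:ℝ)⁻¹ ^ k := (inv3_pow_eq_rpow k).symm

lemma scaleIndex_eq {k : ℕ} {ξ : ℝ} (hl : (3:ℝ)⁻¹ ^ (k+1) < ξ) (hu : ξ ≤ (3:ℝ)⁻¹ ^ k) :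
    scaleIndex ξ = k := by
  have h3 : (1:ℝ) < 3 := by norm_num
  have hξ0 : 0 < ξ := lt_trans (by positivity) hl
  have key : ∀ m : ℕ, Real.logb 3 ((3:ℝ)⁻¹ ^ m) = -(m:ℝ) := by
    intro m
    rw [inv3_pow_eq_rpow, Real.logb_rpow (by norm_num) (by norm_num)]
  have h1 : Real.logb 3 ξ ≤ -(k:ℝ) := by
    rw [← key k]
    exact (Real.logb_le_logb h3 hξ0 (by positivity)).mpr hu
  have h2 : -((k:ℝ)+1) < Real.logb 3 ξ := by
    have := Real.logb_lt_logb h3 (show (0:ℝ) < (3:ℝ)⁻¹ ^ (k+1) by positivity) hl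
    rw [key (k+1)] at this
    push_cast at this; linarith
  unfold scaleIndex
  rw [Nat.floor_eq_iff (by linarith)]
  constructor <;> · push_cast; linarith


namespace CantorScheme
variable (C : CantorScheme) (s : List Bool)

lemma leftMap_nonpos {ξ : ℝ} (h : ξ ≤ 0) : C.leftMap s ξ = C.a s := by
  rw [leftMap, if_pos h]

lemma leftMap_of_pos {ξ : ℝ} (h : 0 < ξ) : C.leftMap s ξ =
    C.b (s ++ List.replicate (scaleIndex ξ + 2) false) +
      (ξ - (3:ℝ)⁻¹ ^ (scaleIndex ξ + 1)) / ((3:ℝ)⁻¹ ^ scaleIndex ξ - (3:ℝ)⁻¹ ^ (scaleIndex ξ + 1)) *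
      (C.b (s ++ List.replicate (scaleIndex ξ + 1) false) -
        C.b (s ++ List.replicate (scaleIndex ξ + 2) false)) := by
  rw [leftMap, if_neg (not_le.mpr h)]

lemma x0_lt_x1 (k : ℕ) : (3:ℝ)⁻¹ ^ (k+1) < (3:ℝ)⁻¹ ^ k := by
  apply pow_lt_pow_right_of_lt_one₀ (by norm_num) (by norm_num) (by omega)

lemma leftMap_mem (hab : C.a [] < C.b []) {ξ : ℝ} (h0 : 0 < ξ) (h1 : ξ ≤ 1) :
    C.leftMap s ξ ∈ Set.Ioc (C.b (s ++ List.replicate (scaleIndex ξ + 2) false))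
      (C.b (s ++ List.replicate (scaleIndex ξ + 1) false)) := by
  obtain ⟨hl, hu⟩ := scaleIndex_spec h0 h1
  rw [C.leftMap_of_pos s h0]
  have hx := x0_lt_x1 (scaleIndex ξ)
  have hy := C.beta_lt s (scaleIndex ξ + 1)
  have ht0 : 0 < (ξ - (3:ℝ)⁻¹ ^ (scaleIndex ξ + 1)) / ((3:ℝ)⁻¹ ^ scaleIndex ξ - (3:ℝ)⁻¹ ^ (scaleIndex ξ + 1)) :=
    div_pos (by linarith) (by linarith)
  have ht1 : (ξ - (3:ℝ)⁻¹ ^ (scaleIndex ξ + 1)) / ((3:ℝ)⁻¹ ^ scaleIndex ξ - (3:ℝ)⁻¹ ^ (scaleIndex ξ + 1)) ≤ 1 :=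
    (div_le_one (by linarith)).mpr (by linarith)
  constructor
  · nlinarith
  · nlinarith

end CantorScheme


namespace CantorScheme
variable (C : CantorScheme) (s : List Bool)

lemma scaleIndex_one : scaleIndex (1:ℝ) = 0 :=
  scaleIndex_eq (by norm_num) (by norm_num)

lemma leftMap_one : C.leftMap s 1 = C.b (s ++ [false]) := by
  rw [C.leftMap_of_pos s one_pos, scaleIndex_one,
    show ((1:ℝ) - 3⁻¹^(0+1)) / ((3:ℝ)⁻¹^0 - 3⁻¹^(0+1)) = 1 by norm_num,
    show (0+1 : ℕ) = 1 by rfl, List.replicate_one]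
  ring

lemma leftMap_strictMonoOn (hab : C.a [] < C.b []) :
    StrictMonoOn (C.leftMap s) (Set.Icc 0 1) := by
  intro x hx y hy hxy
  rcases le_or_gt x 0 with h0x | h0x
  · have hy0 : 0 < y := (le_antisymm h0x hx.1 ▸ hxy :)
    rw [C.leftMap_nonpos s h0x]
    have := C.leftMap_mem s hab hy0 hy.2
    exact lt_of_lt_of_le (C.a_lt_beta hab s (scaleIndex y + 2)) this.1.le
  · have hy0 : 0 < y := h0x.trans hxy
    have hmx := C.leftMap_mem s hab h0x hx.2
    have hmy := C.leftMap_mem s hab hy0 hy.2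
    obtain ⟨hlx, hux⟩ := scaleIndex_spec h0x hx.2
    obtain ⟨hly, huy⟩ := scaleIndex_spec hy0 hy.2
    have hks : scaleIndex y ≤ scaleIndex x := by
      by_contra hc
      push_neg at hc
      have : (3:ℝ)⁻¹ ^ scaleIndex y ≤ (3:ℝ)⁻¹ ^ (scaleIndex x + 1) :=
        pow_le_pow_of_le_one (by norm_num) (by norm_num) (by omega)
      linarith
    rcases eq_or_lt_of_le hks with heq | hlt
    · rw [C.leftMap_of_pos s h0x, C.leftMap_of_pos s hy0, heq]
      have hx01 := x0_lt_x1 (scaleIndex x)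
      have hy01 := C.beta_lt s (scaleIndex x + 1)
      have : (y - (3:ℝ)⁻¹ ^ (scaleIndex x + 1)) / ((3:ℝ)⁻¹ ^ scaleIndex x - (3:ℝ)⁻¹ ^ (scaleIndex x + 1))
          - (x - (3:ℝ)⁻¹ ^ (scaleIndex x + 1)) / ((3:ℝ)⁻¹ ^ scaleIndex x - (3:ℝ)⁻¹ ^ (scaleIndex x + 1))
          = (y - x) / ((3:ℝ)⁻¹ ^ scaleIndex x - (3:ℝ)⁻¹ ^ (scaleIndex x + 1)) := by
        rw [div_sub_div_same, div_eq_div_iff (by linarith) (by linarith)]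
        ring
      have hpos : 0 < (y - x) / ((3:ℝ)⁻¹ ^ scaleIndex x - (3:ℝ)⁻¹ ^ (scaleIndex x + 1)) :=
        div_pos (by linarith) (by linarith)
      nlinarith
    · calc C.leftMap s x ≤ C.b (s ++ List.replicate (scaleIndex x + 1) false) := hmx.2
        _ ≤ C.b (s ++ List.replicate (scaleIndex y + 2) false) :=
            (C.beta_anti s).antitone (by omega)
        _ < C.leftMap s y := hmy.1

end CantorScheme


namespace CantorScheme
variable (C : CantorScheme) (s : List Bool)

lemma leftMap_mapsTo (hab : C.a [] < C.b []) :
    Set.MapsTo (C.leftMap s) (Set.Icc 0 1) (Set.Icc (C.a s) (C.b (s ++ [false]))) := by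
  intro x hx
  rcases le_or_gt x 0 with h | h
  · rw [C.leftMap_nonpos s h]
    constructor
    · exact le_rfl
    · rw [← List.replicate_one]
      exact (C.a_lt_beta hab s 1).le
  · have hm := C.leftMap_mem s hab h hx.2
    constructor
    · exact (C.a_lt_beta hab s _).le.trans hm.1.le
    · refine hm.2.trans ?_
      rw [← List.replicate_one]
      exact (C.beta_anti s).antitone (by omega)

lemma leftMap_surjOn (hab : C.a [] < C.b []) :
    Set.SurjOn (C.leftMap s) (Set.Icc 0 1) (Set.Icc (C.a s) (C.b (s ++ [false]))) := by
  intro v hv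
  rcases eq_or_lt_of_le hv.1 with heq | hlt
  · exact ⟨0, by simp, (C.leftMap_nonpos s le_rfl).trans heq⟩
  · have hex : ∃ k, C.b (s ++ List.replicate (k+2) false) < v :=
      ((C.tendsto_beta s).comp (tendsto_add_atTop_nat 2)).eventually_lt_const hlt |>.exists
    set k := Nat.find hex with hkdef
    have hk : C.b (s ++ List.replicate (k+2) false) < v := Nat.find_spec hex
    have hk' : v ≤ C.b (s ++ List.replicate (k+1) false) := by
      rcases Nat.eq_zero_or_pos k with h0 | h0
      · rw [h0]
        rw [← List.replicate_one] at hv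
        exact hv.2
      · have := Nat.find_min hex (m := k - 1) (by omega)
        push_neg at this
        have hkk : k - 1 + 2 = k + 1 := by omega
        rwa [hkk] at this
    set x0 : ℝ := (3:ℝ)⁻¹ ^ (k+1) with hx0
    set x1 : ℝ := (3:ℝ)⁻¹ ^ k with hx1
    set y0 := C.b (s ++ List.replicate (k+2) false) with hy0
    set y1 := C.b (s ++ List.replicate (k+1) false) with hy1
    have hxx : x0 < x1 := x0_lt_x1 k
    have hyy : y0 < y1 := C.beta_lt s (k+1)
    set ξ := x0 + (v - y0) / (y1 - y0) * (x1 - x0) with hξdef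
    have ht0 : 0 < (v - y0) / (y1 - y0) := div_pos (by linarith) (by linarith)
    have ht1 : (v - y0) / (y1 - y0) ≤ 1 := (div_le_one (by linarith)).mpr (by linarith)
    have hT : 0 < (v - y0) / (y1 - y0) * (x1 - x0) := mul_pos ht0 (by linarith)
    have hT' : (v - y0) / (y1 - y0) * (x1 - x0) ≤ 1 * (x1 - x0) :=
      mul_le_mul_of_nonneg_right ht1 (by linarith)
    have hξl : x0 < ξ := by rw [hξdef]; linarith
    have hξu : ξ ≤ x1 := by rw [hξdef]; linarith
    have hsc : scaleIndex ξ = k := scaleIndex_eq hξl hξu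
    have hξ0 : 0 < ξ := lt_trans (by positivity) hξl
    have hξ1 : ξ ≤ 1 := hξu.trans (pow_le_one₀ (by norm_num) (by norm_num))
    refine ⟨ξ, ⟨hξ0.le, hξ1⟩, ?_⟩
    rw [C.leftMap_of_pos s hξ0, hsc, ← hx0, ← hx1, ← hy0, ← hy1]
    have h1 : (ξ - x0) / (x1 - x0) = (v - y0) / (y1 - y0) := by
      rw [hξdef, add_sub_cancel_left]
      exact mul_div_cancel_right₀ _ (by linarith : x1 - x0 ≠ 0)
    rw [h1, div_mul_cancel₀ _ (by linarith : y1 - y0 ≠ 0)]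
    ring

lemma leftMap_zero : C.leftMap s 0 = C.a s := C.leftMap_nonpos s le_rfl

end CantorScheme

theorem strictMonoOn_icc_continuousOn {f : ℝ → ℝ} {a b c d : ℝ} (hab : a ≤ b)
    (mono : StrictMonoOn f (Set.Icc a b))
    (maps : Set.MapsTo f (Set.Icc a b) (Set.Icc c d))
    (surj : Set.SurjOn f (Set.Icc a b) (Set.Icc c d)) :
    ContinuousOn f (Set.Icc a b) := by
  rw [continuousOn_iff_continuous_restrict]
  set g : Set.Icc a b → Set.Icc c d := maps.restrict f _ _ with hg
  have hmono : StrictMono g := fun x y hxy => by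
    show (f x : ℝ) < f y
    exact mono x.2 y.2 hxy
  have hsurj : Function.Surjective g := by
    intro y
    obtain ⟨x, hx, hfx⟩ := surj y.2
    exact ⟨⟨x, hx⟩, Subtype.ext hfx⟩
  have : Continuous g := ((StrictMono.orderIsoOfSurjective g hmono hsurj).toHomeomorph).continuous
  have hrestr : Set.restrict (Set.Icc a b) f = Subtype.val ∘ g := rfl
  show Continuous (Subtype.val ∘ g)
  exact continuous_subtype_val.comp this

namespace CantorScheme
variable (C : CantorScheme) (s : List Bool)

lemma leftMap_continuousOn (hab : C.a [] < C.b []) :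
    ContinuousOn (C.leftMap s) (Set.Icc 0 1) :=
  strictMonoOn_icc_continuousOn (by norm_num) (C.leftMap_strictMonoOn s hab)
    (C.leftMap_mapsTo s hab) (C.leftMap_surjOn s hab)

end CantorScheme


namespace CantorScheme

def mirror (C : CantorScheme) : CantorScheme where
  a s := -C.b (s.map not)
  b s := -C.a (s.map not)
  left_min s := by
    show -C.b ((s ++ [false]).map not) = -C.b (s.map not)
    rw [List.map_append]
    simp only [List.map_cons, List.map_nil, Bool.not_false]
    rw [C.right_max]
  right_max s := by
    show -C.a ((s ++ [true]).map not) = -C.a (s.map not)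
    rw [List.map_append]
    simp only [List.map_cons, List.map_nil, Bool.not_true]
    rw [C.left_min]
  lt1 s := by
    show -C.b ((s ++ [false]).map not) < -C.a ((s ++ [false]).map not)
    rw [List.map_append]
    simp only [List.map_cons, List.map_nil, Bool.not_false]
    exact neg_lt_neg (C.lt3 _)
  lt2 s := by
    show -C.a ((s ++ [false]).map not) < -C.b ((s ++ [true]).map not)
    rw [List.map_append, List.map_append]
    simp only [List.map_cons, List.map_nil, Bool.not_false, Bool.not_true]
    exact neg_lt_neg (C.lt2 _)
  lt3 s := by
    show -C.b ((s ++ [true]).map not) < -C.a ((s ++ [true]).map not)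
    rw [List.map_append]
    simp only [List.map_cons, List.map_nil, Bool.not_true]
    exact neg_lt_neg (C.lt1 _)
  diam_tendsto f := by
    have h := C.diam_tendsto (fun i => !(f i))
    convert h using 2 with m
    show -C.a ((List.ofFn fun i : Fin m => f i).map not) -
        -C.b ((List.ofFn fun i : Fin m => f i).map not) = _
    rw [List.map_ofFn]
    show -C.a (List.ofFn fun i => !(f i)) - -C.b (List.ofFn fun i => !(f i)) = _
    ring

lemma map_not_map_not (s : List Bool) : (s.map not).map not = s := by
  rw [List.map_map]
  have : (not ∘ not) = id := by funext x; simp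
  rw [this, List.map_id]

lemma mirror_hab (C : CantorScheme) (hab : C.a [] < C.b []) :
    C.mirror.a [] < C.mirror.b [] := by
  show -C.b ([].map not) < -C.a ([].map not)
  simp only [List.map_nil]
  exact neg_lt_neg hab

lemma mirror_b_false (C : CantorScheme) (s : List Bool) (m : ℕ) :
    C.mirror.b (s.map not ++ List.replicate m false) = -C.a (s ++ List.replicate m true) := by
  show -C.a ((s.map not ++ List.replicate m false).map not) = _
  rw [List.map_append, map_not_map_not, List.map_replicate]
  rfl

lemma rightMap_nonpos (C : CantorScheme) (s : List Bool) {ξ : ℝ} (h : ξ ≤ 0) :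
    C.rightMap s ξ = C.b s := by
  rw [rightMap, if_pos h]

lemma rightMap_of_pos (C : CantorScheme) (s : List Bool) {ξ : ℝ} (h : 0 < ξ) : C.rightMap s ξ =
    C.a (s ++ List.replicate (scaleIndex ξ + 2) true) +
      (ξ - (3:ℝ)⁻¹ ^ (scaleIndex ξ + 1)) / ((3:ℝ)⁻¹ ^ scaleIndex ξ - (3:ℝ)⁻¹ ^ (scaleIndex ξ + 1)) *
      (C.a (s ++ List.replicate (scaleIndex ξ + 1) true) -
        C.a (s ++ List.replicate (scaleIndex ξ + 2) true)) := by
  rw [rightMap, if_neg (not_le.mpr h)]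

lemma rightMap_eq_neg_mirror (C : CantorScheme) (s : List Bool) (ξ : ℝ) :
    C.rightMap s ξ = -(C.mirror.leftMap (s.map not) ξ) := by
  rcases le_or_gt ξ 0 with h | h
  · rw [C.rightMap_nonpos s h, C.mirror.leftMap_nonpos (s.map not) h]
    show C.b s = -(-C.b ((s.map not).map not))
    rw [map_not_map_not, neg_neg]
  · rw [C.rightMap_of_pos s h, C.mirror.leftMap_of_pos (s.map not) h,
      mirror_b_false, mirror_b_false]
    ring

end CantorScheme


namespace CantorScheme
variable (C : CantorScheme) (s : List Bool)

lemma rightMap_mapsTo (hab : C.a [] < C.b []) :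
    Set.MapsTo (C.rightMap s) (Set.Icc 0 1) (Set.Icc (C.a (s ++ [true])) (C.b s)) := by
  intro x hx
  have h := C.mirror.leftMap_mapsTo (s.map not) (C.mirror_hab hab) hx
  rw [C.rightMap_eq_neg_mirror s x]
  constructor
  · have := h.2
    rw [show C.mirror.b (s.map not ++ [false]) = -C.a (s ++ [true]) by
      rw [← List.replicate_one, mirror_b_false, List.replicate_one]] at this
    linarith
  · have := h.1
    rw [show C.mirror.a (s.map not) = -C.b s by
      show -C.b ((s.map not).map not) = _
      rw [map_not_map_not]] at this
    linarith

lemma rightMap_lt_b (hab : C.a [] < C.b []) {ξ : ℝ} (h0 : 0 < ξ) (h1 : ξ ≤ 1) :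
    C.rightMap s ξ < C.b s := by
  have h := (C.mirror.leftMap_mem (s.map not) (C.mirror_hab hab) h0 h1).1
  have h2 := C.mirror.a_lt_beta (C.mirror_hab hab) (s.map not) (scaleIndex ξ + 2)
  have h3 : C.mirror.a (s.map not) = -C.b s := by
    show -C.b ((s.map not).map not) = _
    rw [map_not_map_not]
  rw [C.rightMap_eq_neg_mirror s ξ]
  rw [h3] at h2
  linarith

lemma rightMap_continuousOn (hab : C.a [] < C.b []) :
    ContinuousOn (C.rightMap s) (Set.Icc 0 1) := by
  have h := (C.mirror.leftMap_continuousOn (s.map not) (C.mirror_hab hab)).neg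
  have : C.rightMap s = fun ξ => -(C.mirror.leftMap (s.map not) ξ) := by
    funext ξ; exact C.rightMap_eq_neg_mirror s ξ
  rw [this]
  exact h

lemma a_nonneg (h0 : C.a [] = 0) : 0 ≤ C.a s := by
  rw [← h0]
  have := C.a_le_a_append [] s
  simpa using this

lemma b_le_one (h1 : C.b [] = 1) : C.b s ≤ 1 := by
  rw [← h1]
  have := C.b_append_le [] s
  simpa using this

lemma a_mem_unit (hab : C.a [] < C.b []) (h0 : C.a [] = 0) (h1 : C.b [] = 1) :
    C.a s ∈ Set.Icc (0:ℝ) 1 :=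
  ⟨C.a_nonneg s h0, (C.a_lt_b hab s).le.trans (C.b_le_one s h1)⟩

lemma b_mem_unit (hab : C.a [] < C.b []) (h0 : C.a [] = 0) (h1 : C.b [] = 1) :
    C.b s ∈ Set.Icc (0:ℝ) 1 :=
  ⟨(C.a_nonneg s h0).trans (C.a_lt_b hab s).le, C.b_le_one s h1⟩

lemma leftMap_mem_unit (hab : C.a [] < C.b []) (h0 : C.a [] = 0) (h1 : C.b [] = 1)
    {ξ : ℝ} (hξ : ξ ∈ Set.Icc (0:ℝ) 1) : C.leftMap s ξ ∈ Set.Icc (0:ℝ) 1 := by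
  have h := C.leftMap_mapsTo s hab hξ
  exact ⟨(C.a_nonneg s h0).trans h.1, h.2.trans (C.b_le_one _ h1)⟩

lemma rightMap_mem_unit (hab : C.a [] < C.b []) (h0 : C.a [] = 0) (h1 : C.b [] = 1)
    {ξ : ℝ} (hξ : ξ ∈ Set.Icc (0:ℝ) 1) : C.rightMap s ξ ∈ Set.Icc (0:ℝ) 1 := by
  have h := C.rightMap_mapsTo s hab hξ
  exact ⟨(C.a_nonneg _ h0).trans h.1, h.2.trans (C.b_le_one _ h1)⟩

lemma a_lt_leftMap (hab : C.a [] < C.b []) {ξ : ℝ} (h0 : 0 < ξ) (h1 : ξ ≤ 1) :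
    C.a s < C.leftMap s ξ :=
  lt_of_lt_of_le (C.a_lt_beta hab s (scaleIndex ξ + 2)) (C.leftMap_mem s hab h0 h1).1.le

lemma leftMap_le (hab : C.a [] < C.b []) {ξ : ℝ} (hξ : ξ ∈ Set.Icc (0:ℝ) 1) :
    C.leftMap s ξ ≤ C.b (s ++ [false]) := (C.leftMap_mapsTo s hab hξ).2

lemma a_le_leftMap (hab : C.a [] < C.b []) {ξ : ℝ} (hξ : ξ ∈ Set.Icc (0:ℝ) 1) :
    C.a s ≤ C.leftMap s ξ := (C.leftMap_mapsTo s hab hξ).1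

lemma rightMap_le_b (hab : C.a [] < C.b []) {ξ : ℝ} (hξ : ξ ∈ Set.Icc (0:ℝ) 1) :
    C.rightMap s ξ ≤ C.b s := (C.rightMap_mapsTo s hab hξ).2

lemma a_true_le_rightMap (hab : C.a [] < C.b []) {ξ : ℝ} (hξ : ξ ∈ Set.Icc (0:ℝ) 1) :
    C.a (s ++ [true]) ≤ C.rightMap s ξ := (C.rightMap_mapsTo s hab hξ).1

end CantorScheme


def blocks : ℕ → List (List Bool)
  | 0 => [[]]
  | n+1 => ((blocks n).map (List.cons false)) ++ ((blocks n).map (List.cons true))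

lemma mem_blocks : ∀ {n : ℕ} {s : List Bool}, s ∈ blocks n ↔ s.length = n := by
  intro n
  induction n with
  | zero => intro s; simp [blocks, List.length_eq_zero_iff]
  | succ n ih =>
    intro s
    constructor
    · intro hs
      simp only [blocks, List.mem_append, List.mem_map] at hs
      rcases hs with ⟨t, ht, rfl⟩ | ⟨t, ht, rfl⟩ <;> simp [ih.mp ht]
    · intro hs
      match s with
      | x :: t =>
        have ht : t.length = n := by simpa using hs
        simp only [blocks, List.mem_append, List.mem_map]
        cases x
        · exact Or.inl ⟨t, ih.mpr ht, rfl⟩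
        · exact Or.inr ⟨t, ih.mpr ht, rfl⟩

lemma blocks_eq_cons (n : ℕ) : ∃ r, blocks n = List.replicate n false :: r := by
  induction n with
  | zero => exact ⟨[], rfl⟩
  | succ n ih =>
    obtain ⟨r, hr⟩ := ih
    refine ⟨(r.map (List.cons false)) ++ ((blocks n).map (List.cons true)), ?_⟩
    rw [blocks, hr, List.replicate_succ]
    simp

namespace CantorScheme

lemma pairwise_cross (C : CantorScheme) :
    ∀ (n : ℕ) (u : List Bool),
      List.Pairwise (fun s t => C.b (u ++ s) < C.a (u ++ t)) (blocks n) := by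
  intro n
  induction n with
  | zero => intro u; simp [blocks]
  | succ n ih =>
    intro u
    rw [blocks, List.pairwise_append]
    have hcons : ∀ (i : Bool) (s : List Bool), u ++ (i :: s) = (u ++ [i]) ++ s := by
      intro i s; simp
    refine ⟨?_, ?_, ?_⟩
    · rw [List.pairwise_map]
      refine (ih (u ++ [false])).imp ?_
      intro s t h
      rw [hcons false s, hcons false t]
      exact h
    · rw [List.pairwise_map]
      refine (ih (u ++ [true])).imp ?_
      intro s t h
      rw [hcons true s, hcons true t]
      exact h
    · intro x hx y hy
      simp only [List.mem_map] at hx hy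
      obtain ⟨s, hs, rfl⟩ := hx
      obtain ⟨t, ht, rfl⟩ := hy
      rw [hcons false s, hcons true t]
      calc C.b ((u ++ [false]) ++ s) ≤ C.b (u ++ [false]) := C.b_append_le _ _
        _ < C.a (u ++ [true]) := C.lt2 u
        _ ≤ C.a ((u ++ [true]) ++ t) := C.a_le_a_append _ _

/-- The list of the four letters contributed by a node `s`. -/
noncomputable def lstBlock (C : CantorScheme) (ξ : ℝ) (s : List Bool) : List ℝ :=
  [C.a s, C.leftMap s ξ, C.rightMap s ξ, C.b s]

/-- The full sorted list of boundary points. -/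
noncomputable def lst (C : CantorScheme) (n : ℕ) (ξ : ℝ) : List ℝ :=
  ((blocks n).map (C.lstBlock ξ)).flatten

lemma lst_sorted (C : CantorScheme) (hab : C.a [] < C.b []) (n : ℕ) {ξ : ℝ}
    (h0 : 0 < ξ) (h1 : ξ ≤ 1) : List.Pairwise (· < ·) (C.lst n ξ) := by
  rw [lst, List.pairwise_flatten]
  have hmem : ∀ s x, x ∈ C.lstBlock ξ s → C.a s ≤ x ∧ x ≤ C.b s := by
    intro s x hx
    have hL1 := C.a_lt_leftMap s hab h0 h1
    have hL2 := C.leftMap_le s hab ⟨h0.le, h1⟩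
    have hR1 := C.a_true_le_rightMap s hab ⟨h0.le, h1⟩
    have hR2 := C.rightMap_lt_b s hab h0 h1
    have hc : C.b (s ++ [false]) < C.a (s ++ [true]) := C.lt2 s
    have hblt := C.a_lt_b hab s
    simp only [lstBlock, List.mem_cons, List.not_mem_nil, or_false] at hx
    rcases hx with rfl | rfl | rfl | rfl
    · exact ⟨le_rfl, hblt.le⟩
    · exact ⟨hL1.le, hL2.trans (hc.le.trans (hR1.trans hR2.le))⟩
    · exact ⟨hL1.le.trans (hL2.trans (hc.le.trans hR1)), hR2.le⟩
    · exact ⟨hblt.le, le_rfl⟩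
  refine ⟨?_, ?_⟩
  · intro l hl
    simp only [List.mem_map] at hl
    obtain ⟨s, _, rfl⟩ := hl
    have hL1 := C.a_lt_leftMap s hab h0 h1
    have hL2 := C.leftMap_le s hab ⟨h0.le, h1⟩
    have hR1 := C.a_true_le_rightMap s hab ⟨h0.le, h1⟩
    have hR2 := C.rightMap_lt_b s hab h0 h1
    have hc : C.b (s ++ [false]) < C.a (s ++ [true]) := C.lt2 s
    have hLR : C.leftMap s ξ < C.rightMap s ξ := lt_of_le_of_lt hL2 (lt_of_lt_of_le hc hR1)
    show List.Pairwise (· < ·) [C.a s, C.leftMap s ξ, C.rightMap s ξ, C.b s]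
    refine List.Pairwise.cons ?_ (List.Pairwise.cons ?_ (List.Pairwise.cons ?_
      (List.Pairwise.cons ?_ List.Pairwise.nil)))
    · intro x hx
      simp only [List.mem_cons, List.not_mem_nil, or_false] at hx
      rcases hx with rfl | rfl | rfl
      · exact hL1
      · exact hL1.trans hLR
      · exact C.a_lt_b hab s
    · intro x hx
      simp only [List.mem_cons, List.not_mem_nil, or_false] at hx
      rcases hx with rfl | rfl
      · exact hLR
      · exact hLR.trans hR2
    · intro x hx
      simp only [List.mem_cons, List.not_mem_nil, or_false] at hx
      rcases hx with rfl
      exact hR2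
    · intro x hx
      simp at hx
  · have hcross := C.pairwise_cross n []
    simp only [List.nil_append] at hcross
    have : List.Pairwise (fun s t => C.b s < C.a t) (blocks n) := hcross
    rw [List.pairwise_map]
    refine this.imp ?_
    intro s t hst x hx y hy
    exact ((hmem s x hx).2.trans_lt hst).trans_le (hmem t y hy).1

end CantorScheme


namespace CantorScheme

lemma mem_lst_iff (C : CantorScheme) (n : ℕ) (ξ : ℝ) (x : ℝ) :
    x ∈ C.lst n ξ ↔ x ∈ C.boundary n ξ := by
  rw [lst, List.mem_flatten, boundary, Finset.mem_image]
  constructor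
  · rintro ⟨l, hl, hx⟩
    simp only [List.mem_map] at hl
    obtain ⟨s, hs, rfl⟩ := hl
    have hlen : s.length = n := mem_blocks.mp hs
    have : ∃ v : Fin n → Bool, List.ofFn v = s := by
      subst hlen
      exact ⟨fun i => s[(i : ℕ)], List.ofFn_getElem⟩
    obtain ⟨v, rfl⟩ := this
    simp only [lstBlock, List.mem_cons, List.not_mem_nil, or_false] at hx
    rcases hx with rfl | rfl | rfl | rfl
    · exact ⟨(v, 0), Finset.mem_univ _, rfl⟩
    · exact ⟨(v, 1), Finset.mem_univ _, rfl⟩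
    · exact ⟨(v, 2), Finset.mem_univ _, rfl⟩
    · exact ⟨(v, 3), Finset.mem_univ _, rfl⟩
  · rintro ⟨⟨v, i⟩, -, rfl⟩
    refine ⟨C.lstBlock ξ (List.ofFn v), ?_, ?_⟩
    · simp only [List.mem_map]
      exact ⟨List.ofFn v, mem_blocks.mpr (by simp), rfl⟩
    · fin_cases i <;> simp [lstBlock]

lemma sort_boundary (C : CantorScheme) (hab : C.a [] < C.b []) (n : ℕ) {ξ : ℝ}
    (h0 : 0 < ξ) (h1 : ξ ≤ 1) :
    (C.boundary n ξ).sort (· ≤ ·) = C.lst n ξ := by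
  have hsorted := C.lst_sorted hab n h0 h1
  have hnodup : (C.lst n ξ).Nodup := hsorted.imp ne_of_lt
  apply List.Perm.eq_of_pairwise' (Finset.pairwise_sort _ _) (hsorted.imp le_of_lt)
    (List.perm_of_nodup_nodup_toFinset_eq (Finset.sort_nodup _ _) hnodup ?_)
  rw [Finset.sort_toFinset]
  ext x
  rw [List.mem_toFinset]
  exact (C.mem_lst_iff n ξ x).symm

end CantorScheme

section AltProd

variable {G : Type*} [Group G]

lemma altProd_block (j : ℝ → G) (a b c d : ℝ) (rest : List ℝ) :
    altProd j false (a :: b :: c :: d :: rest) =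
      (j a)⁻¹ * j b * (j c)⁻¹ * j d * altProd j false rest := by
  simp [altProd, mul_assoc]

lemma altProd_lst {G : Type*} [Group G] (j : ℝ → G) (C : CantorScheme) (ξ : ℝ) :
    ∀ l : List (List Bool),
      altProd j false ((l.map (C.lstBlock ξ)).flatten) =
        (l.map fun s =>
          (j (C.a s))⁻¹ * j (C.leftMap s ξ) * (j (C.rightMap s ξ))⁻¹ * j (C.b s)).prod := by
  intro l
  induction l with
  | nil => simp [altProd]
  | cons s l ih =>
    simp only [List.map_cons, List.flatten_cons, List.prod_cons, ← ih]
    show altProd j false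
      (C.a s :: C.leftMap s ξ :: C.rightMap s ξ :: C.b s :: (l.map (C.lstBlock ξ)).flatten) = _
    rw [altProd_block]

end AltProd

/-- The alternating product written as a product over the blocks. -/
noncomputable def zfun {G : Type*} [Group G] (C : CantorScheme) (j : ℝ → G) (n : ℕ) (ξ : ℝ) : G :=
  ((blocks n).map fun s =>
    (j (C.a s))⁻¹ * j (C.leftMap s ξ) * (j (C.rightMap s ξ))⁻¹ * j (C.b s)).prod

lemma z_eq_zfun {G : Type*} [Group G] (C : CantorScheme) (j : ℝ → G) (hab : C.a [] < C.b [])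
    (n : ℕ) {ξ : ℝ} (hξ : ξ ∈ Set.Icc (0:ℝ) 1) : C.z j n ξ = zfun C j n ξ := by
  rcases lt_or_ge 0 ξ with h | h
  · rw [CantorScheme.z, if_neg (not_le.mpr h), piMinus, C.sort_boundary hab n h hξ.2,
      CantorScheme.lst, altProd_lst, zfun]
  · have hξ0 : ξ ≤ 0 := h
    rw [CantorScheme.z, if_pos hξ0, zfun]
    symm
    apply List.prod_eq_one
    intro x hx
    simp only [List.mem_map] at hx
    obtain ⟨s, -, rfl⟩ := hx
    rw [C.leftMap_nonpos s hξ0, C.rightMap_nonpos s hξ0]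
    group


section Continuity

variable {G : Type*} [Group G] [TopologicalSpace G] [IsTopologicalGroup G]

lemma continuous_restrict_zfun (C : CantorScheme) (j : ℝ → G)
    (hab : C.a [] < C.b []) (h0 : C.a [] = 0) (h1 : C.b [] = 1)
    (hjc : Continuous ((Set.Icc (0:ℝ) 1).restrict j)) (n : ℕ) :
    Continuous ((Set.Icc (0:ℝ) 1).restrict (zfun C j n)) := by
  have hterm : ∀ s : List Bool, Continuous fun ξ : Set.Icc (0:ℝ) 1 =>
      (j (C.a s))⁻¹ * j (C.leftMap s ξ) * (j (C.rightMap s ξ))⁻¹ * j (C.b s) := by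
    intro s
    have hL : Continuous fun ξ : Set.Icc (0:ℝ) 1 => j (C.leftMap s ξ) := by
      have hLc : Continuous ((Set.Icc (0:ℝ) 1).restrict (C.leftMap s)) :=
        continuousOn_iff_continuous_restrict.mp (C.leftMap_continuousOn s hab)
      have : Continuous fun ξ : Set.Icc (0:ℝ) 1 =>
          (⟨C.leftMap s ξ, C.leftMap_mem_unit s hab h0 h1 ξ.2⟩ : Set.Icc (0:ℝ) 1) :=
        Continuous.subtype_mk hLc _
      exact hjc.comp this
    have hR : Continuous fun ξ : Set.Icc (0:ℝ) 1 => j (C.rightMap s ξ) := by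
      have hRc : Continuous ((Set.Icc (0:ℝ) 1).restrict (C.rightMap s)) :=
        continuousOn_iff_continuous_restrict.mp (C.rightMap_continuousOn s hab)
      have : Continuous fun ξ : Set.Icc (0:ℝ) 1 =>
          (⟨C.rightMap s ξ, C.rightMap_mem_unit s hab h0 h1 ξ.2⟩ : Set.Icc (0:ℝ) 1) :=
        Continuous.subtype_mk hRc _
      exact hjc.comp this
    exact ((continuous_const.mul hL).mul hR.inv).mul continuous_const
  have : (Set.Icc (0:ℝ) 1).restrict (zfun C j n) = fun ξ : Set.Icc (0:ℝ) 1 =>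
      ((blocks n).map fun s =>
        (j (C.a s))⁻¹ * j (C.leftMap s ξ) * (j (C.rightMap s ξ))⁻¹ * j (C.b s)).prod := rfl
  rw [this]
  exact continuous_list_prod _ fun s _ => hterm s

end Continuity


section HFun

/-- Piecewise linear squeezing map: `[0,m] → [0,ε]` linearly, `[m,D] → [ε,D]` linearly,
identity on `[D,∞)`. -/
noncomputable def hFun (m D ε x : ℝ) : ℝ :=
  if x ≤ m then (ε / m) * x else if x ≤ D then ε + ((D - ε) / (D - m)) * (x - m) else x

lemma hFun_eq1 {m D ε x : ℝ} (hx : x ≤ m) : hFun m D ε x = (ε / m) * x := if_pos hx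

lemma hFun_eq2 {m D ε x : ℝ} (hx : ¬ x ≤ m) (hxD : x ≤ D) :
    hFun m D ε x = ε + ((D - ε) / (D - m)) * (x - m) := by
  rw [hFun, if_neg hx, if_pos hxD]

lemma hFun_eq3 {m D ε x : ℝ} (hx : ¬ x ≤ m) (hxD : ¬ x ≤ D) : hFun m D ε x = x := by
  rw [hFun, if_neg hx, if_neg hxD]

lemma hFun_zero {m D ε : ℝ} (hm : 0 < m) : hFun m D ε 0 = 0 := by
  rw [hFun_eq1 hm.le, mul_zero]

lemma hFun_fix {m D ε x : ℝ} (hmD : m < D) (hx : D ≤ x) : hFun m D ε x = x := by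
  rcases eq_or_lt_of_le hx with heq | h
  · rw [← heq, hFun_eq2 (by linarith) le_rfl,
      div_mul_cancel₀ _ (sub_ne_zero.mpr (by linarith : D ≠ m))]
    ring
  · rw [hFun_eq3 (by linarith) (by linarith)]

lemma hFun_one {m D ε : ℝ} (hmD : m < D) (hD1 : D ≤ 1) : hFun m D ε 1 = 1 :=
  hFun_fix hmD hD1

lemma hFun_strictMono {m D ε : ℝ} (hm : 0 < m) (hmD : m < D) (hε : 0 < ε) (hεD : ε < D) :
    StrictMono (hFun m D ε) := by
  intro x y hxy
  have hslope1 : 0 < ε / m := div_pos hε hm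
  have hslope2 : 0 < (D - ε) / (D - m) := div_pos (by linarith) (by linarith)
  have hval2 : ∀ z, ¬ z ≤ m → z ≤ D → hFun m D ε z ≤ D := by
    intro z hz hzD
    rw [hFun_eq2 hz hzD]
    have h1 : (D - ε) / (D - m) * (z - m) ≤ (D - ε) / (D - m) * (D - m) :=
      mul_le_mul_of_nonneg_left (by linarith) hslope2.le
    rw [div_mul_cancel₀ _ (by linarith : D - m ≠ 0)] at h1
    linarith
  rcases le_or_gt x m with hx | hx
  · rcases le_or_gt y m with hy | hy
    · rw [hFun_eq1 hx, hFun_eq1 hy]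
      exact mul_lt_mul_of_pos_left hxy hslope1
    · have h1 : hFun m D ε x ≤ ε := by
        rw [hFun_eq1 hx]
        have := mul_le_mul_of_nonneg_left hx hslope1.le
        rwa [div_mul_cancel₀ _ hm.ne'] at this
      rcases le_or_gt y D with hyD | hyD
      · rw [hFun_eq2 (not_le.mpr hy) hyD]
        have : 0 < (D - ε) / (D - m) * (y - m) := mul_pos hslope2 (by linarith)
        linarith
      · rw [hFun_eq3 (not_le.mpr hy) (not_le.mpr hyD)]
        linarith
  · have hxy' : ¬ y ≤ m := not_le.mpr (hx.trans hxy)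
    rcases le_or_gt y D with hyD | hyD
    · have hxD : x ≤ D := le_trans hxy.le hyD
      rw [hFun_eq2 (not_le.mpr hx) hxD, hFun_eq2 hxy' hyD]
      have := mul_lt_mul_of_pos_left (sub_lt_sub_right hxy m) hslope2
      linarith
    · rcases le_or_gt x D with hxD | hxD
      · have := hval2 x (not_le.mpr hx) hxD
        rw [hFun_eq3 hxy' (not_le.mpr hyD)]
        linarith
      · rw [hFun_eq3 (not_le.mpr hx) (not_le.mpr hxD), hFun_eq3 hxy' (not_le.mpr hyD)]
        exact hxy

lemma hFun_continuous {m D ε : ℝ} (hm : 0 < m) (hmD : m < D) (hεD : ε < D) :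
    Continuous (hFun m D ε) := by
  apply Continuous.if_le
  · exact continuous_const.mul continuous_id
  · apply Continuous.if_le
    · exact continuous_const.add (continuous_const.mul (continuous_id.sub continuous_const))
    · exact continuous_id
    · exact continuous_id
    · exact continuous_const
    · intro x hx
      rw [hx, div_mul_cancel₀ _ (by linarith : D - m ≠ 0)]
      ring
  · exact continuous_id
  · exact continuous_const
  · intro x hx
    rw [hx, div_mul_cancel₀ _ hm.ne']
    rw [if_pos (by linarith : m ≤ D)]
    ring

lemma hFun_mapsTo {m D ε : ℝ} (hm : 0 < m) (hmD : m < D) (hD1 : D ≤ 1) (hε : 0 < ε)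
    (hεD : ε < D) : Set.MapsTo (hFun m D ε) (Set.Icc 0 1) (Set.Icc 0 1) := by
  intro x hx
  constructor
  · rw [← hFun_zero (m := m) (D := D) (ε := ε) hm]
    exact (hFun_strictMono hm hmD hε hεD).monotone hx.1
  · rw [← hFun_one (m := m) (ε := ε) hmD hD1]
    exact (hFun_strictMono hm hmD hε hεD).monotone hx.2

lemma exists_homeo {m D ε : ℝ} (hm : 0 < m) (hmD : m < D) (hD1 : D ≤ 1) (hε : 0 < ε)
    (hεD : ε < D) :
    ∃ h : Set.Icc (0:ℝ) 1 ≃ₜ Set.Icc (0:ℝ) 1,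
      ∀ x : Set.Icc (0:ℝ) 1, (h x : ℝ) = hFun m D ε x := by
  set g : Set.Icc (0:ℝ) 1 → Set.Icc (0:ℝ) 1 :=
    (hFun_mapsTo hm hmD hD1 hε hεD).restrict _ _ _ with hg
  have hmono : StrictMono g := fun x y hxy => by
    show (hFun m D ε x : ℝ) < hFun m D ε y
    exact hFun_strictMono hm hmD hε hεD hxy
  have hsurj : Function.Surjective g := by
    intro y
    have hIVT := intermediate_value_Icc (by norm_num : (0:ℝ) ≤ 1)
      (hFun_continuous hm hmD hεD).continuousOn
    rw [hFun_zero hm, hFun_one hmD hD1] at hIVT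
    obtain ⟨x, hx, hfx⟩ := hIVT y.2
    exact ⟨⟨x, hx⟩, Subtype.ext hfx⟩
  exact ⟨(StrictMono.orderIsoOfSurjective g hmono hsurj).toHomeomorph, fun x => rfl⟩

end HFun


lemma key_word {G : Type*} [Group G] [TopologicalSpace G] [IsTopologicalGroup G]
    (C : CantorScheme) (j : ℝ → G) (h0 : C.a [] = 0) (h1 : C.b [] = 1) (n : ℕ)
    (hf : ℝ → ℝ) (H : G →* G)
    (hH : ∀ x ∈ Set.Icc (0:ℝ) 1, H (j x) = j (hf x))
    (hfix : ∀ x, C.a (List.replicate n false ++ [true]) ≤ x → hf x = x)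
    (hf0 : hf 0 = 0)
    {ξ : ℝ} (hξ : ξ ∈ Set.Icc (0:ℝ) 1) :
    H (zfun C j n ξ) * (zfun C j n ξ)⁻¹ =
      (j 0)⁻¹ * j (hf (C.leftMap (List.replicate n false) ξ)) *
        (j (C.leftMap (List.replicate n false) ξ))⁻¹ * j 0 := by
  have hab : C.a [] < C.b [] := by rw [h0, h1]; norm_num
  set s₀ : List Bool := List.replicate n false with hs₀
  have hA0 : C.a s₀ = 0 := by
    have := C.a_append_replicate_false [] n
    rw [List.nil_append] at this
    rw [hs₀, this, h0]
  have hDb : C.a (s₀ ++ [true]) < C.b s₀ := by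
    calc C.a (s₀ ++ [true]) < C.b (s₀ ++ [true]) := C.lt3 s₀
      _ = C.b s₀ := C.right_max s₀
  obtain ⟨r, hr⟩ := blocks_eq_cons n
  have hcross : ∀ t ∈ r, C.b s₀ < C.a t := by
    have hpc := C.pairwise_cross n []
    rw [hr] at hpc
    simp only [List.nil_append] at hpc
    exact (List.pairwise_cons.mp hpc).1
  have term_eq : ∀ t ∈ r,
      H ((j (C.a t))⁻¹ * j (C.leftMap t ξ) * (j (C.rightMap t ξ))⁻¹ * j (C.b t)) =
      (j (C.a t))⁻¹ * j (C.leftMap t ξ) * (j (C.rightMap t ξ))⁻¹ * j (C.b t) := by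
    intro t ht
    have hDa : C.a (s₀ ++ [true]) ≤ C.a t := (hDb.trans (hcross t ht)).le
    have e1 : H (j (C.a t)) = j (C.a t) := by
      rw [hH _ (C.a_mem_unit t hab h0 h1), hfix _ hDa]
    have e2 : H (j (C.leftMap t ξ)) = j (C.leftMap t ξ) := by
      rw [hH _ (C.leftMap_mem_unit t hab h0 h1 hξ),
        hfix _ (hDa.trans (C.a_le_leftMap t hab hξ))]
    have e3 : H (j (C.rightMap t ξ)) = j (C.rightMap t ξ) := by
      rw [hH _ (C.rightMap_mem_unit t hab h0 h1 hξ),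
        hfix _ (hDa.trans ((C.a_le_a_append t [true]).trans (C.a_true_le_rightMap t hab hξ)))]
    have e4 : H (j (C.b t)) = j (C.b t) := by
      rw [hH _ (C.b_mem_unit t hab h0 h1), hfix _ (hDa.trans (C.a_lt_b hab t).le)]
    rw [map_mul, map_mul, map_mul, map_inv, map_inv, e1, e2, e3, e4]
  have hP : H ((r.map (fun t =>
        (j (C.a t))⁻¹ * j (C.leftMap t ξ) * (j (C.rightMap t ξ))⁻¹ * j (C.b t))).prod) =
      (r.map (fun t =>
        (j (C.a t))⁻¹ * j (C.leftMap t ξ) * (j (C.rightMap t ξ))⁻¹ * j (C.b t))).prod := by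
    rw [map_list_prod, List.map_map]
    congr 1
    exact List.map_congr_left fun t ht => term_eq t ht
  have hhead : H ((j (C.a s₀))⁻¹ * j (C.leftMap s₀ ξ) * (j (C.rightMap s₀ ξ))⁻¹ * j (C.b s₀)) =
      (j 0)⁻¹ * j (hf (C.leftMap s₀ ξ)) * (j (C.rightMap s₀ ξ))⁻¹ * j (C.b s₀) := by
    have e1 : H (j (C.a s₀)) = j 0 := by
      rw [hH _ (C.a_mem_unit s₀ hab h0 h1), hA0, hf0]
    have e2 : H (j (C.leftMap s₀ ξ)) = j (hf (C.leftMap s₀ ξ)) :=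
      hH _ (C.leftMap_mem_unit s₀ hab h0 h1 hξ)
    have e3 : H (j (C.rightMap s₀ ξ)) = j (C.rightMap s₀ ξ) := by
      rw [hH _ (C.rightMap_mem_unit s₀ hab h0 h1 hξ),
        hfix _ (C.a_true_le_rightMap s₀ hab hξ)]
    have e4 : H (j (C.b s₀)) = j (C.b s₀) := by
      rw [hH _ (C.b_mem_unit s₀ hab h0 h1), hfix _ hDb.le]
    rw [map_mul, map_mul, map_mul, map_inv, map_inv, e1, e2, e3, e4]
  rw [zfun, hr, List.map_cons, List.prod_cons, map_mul, hhead, hP, hA0]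
  rw [← hs₀]
  group


-- MORE

/-- If `j : [0,1] → G` is a functorial embedding and `ℐ` a usual Cantor scheme with
`J_∅ = [0,1]`, then each map `z_n : [0,1] → G` is a topological embedding. -/
theorem stmt6 {G : Type*} [Group G] [TopologicalSpace G] [IsTopologicalGroup G]
    (j : ℝ → G) (hj : FunctorialEmbedding j)
    (C : CantorScheme) (h0 : C.a [] = 0) (h1 : C.b [] = 1) (n : ℕ) :
    Topology.IsEmbedding ((Set.Icc (0:ℝ) 1).restrict (C.z j n)) := by
  classical
  obtain ⟨hjE, hjF⟩ := hj
  have hab : C.a [] < C.b [] := by rw [h0, h1]; norm_num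
  set s₀ : List Bool := List.replicate n false with hs₀
  have hA0 : C.a s₀ = 0 := by
    have := C.a_append_replicate_false [] n
    rw [List.nil_append] at this
    rw [hs₀, this, h0]
  -- continuity of the restricted map
  have hzc : Continuous ((Set.Icc (0:ℝ) 1).restrict (C.z j n)) := by
    have h := continuous_restrict_zfun C j hab h0 h1 hjE.continuous n
    have heq : (Set.Icc (0:ℝ) 1).restrict (C.z j n) =
        (Set.Icc (0:ℝ) 1).restrict (zfun C j n) := by
      funext ξ
      exact z_eq_zfun C j hab n ξ.2
    rw [heq]; exact h
  -- injectivity after composing with the separation quotient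
  have hinj : Function.Injective
      (SeparationQuotient.mk ∘ (Set.Icc (0:ℝ) 1).restrict (C.z j n)) := by
    intro ξ η hins'
    have hins : Inseparable (zfun C j n ξ) (zfun C j n η) := by
      rw [← z_eq_zfun C j hab n ξ.2, ← z_eq_zfun C j hab n η.2]
      exact SeparationQuotient.mk_eq_mk.mp hins'
    by_contra hne
    set p := C.leftMap s₀ (ξ:ℝ) with hpdef
    set q := C.leftMap s₀ (η:ℝ) with hqdef
    have hpq : p ≠ q := by
      intro hpq'
      exact hne (Subtype.ext ((C.leftMap_strictMonoOn s₀ hab).injOn ξ.2 η.2 hpq'))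
    have hpmem : p ∈ Set.Icc (C.a s₀) (C.b (s₀ ++ [false])) := C.leftMap_mapsTo s₀ hab ξ.2
    have hqmem : q ∈ Set.Icc (C.a s₀) (C.b (s₀ ++ [false])) := C.leftMap_mapsTo s₀ hab η.2
    have hp0 : 0 ≤ p := hA0 ▸ hpmem.1
    have hq0 : 0 ≤ q := hA0 ▸ hqmem.1
    have hpu : p ∈ Set.Icc (0:ℝ) 1 := C.leftMap_mem_unit s₀ hab h0 h1 ξ.2
    have hqu : q ∈ Set.Icc (0:ℝ) 1 := C.leftMap_mem_unit s₀ hab h0 h1 η.2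
    set D := C.a (s₀ ++ [true]) with hDdef
    have hdD : C.b (s₀ ++ [false]) < D := C.lt2 s₀
    have hD1 : D ≤ 1 := by
      have h := C.a_lt_b hab (s₀ ++ [true])
      have h2 := C.b_le_one (s₀ ++ [true]) h1
      linarith
    set m := max p q with hmdef
    have hm0 : 0 < m := by
      rcases lt_or_ge 0 m with h | h
      · exact h
      · exfalso
        apply hpq
        have hpz : p = 0 := le_antisymm ((le_max_left p q).trans h) hp0
        have hqz : q = 0 := le_antisymm ((le_max_right p q).trans h) hq0
        rw [hpz, hqz]
    have hmD : m < D := max_lt (hpmem.2.trans_lt hdD) (hqmem.2.trans_lt hdD)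
    have hpm : p ≤ m := le_max_left p q
    have hqm : q ≤ m := le_max_right p q
    -- for every admissible ε, the commutator-type expression is inseparable from 1
    have hkey : ∀ ε : ℝ, 0 < ε → ε < D →
        Inseparable ((j q * (j (hFun m D ε q))⁻¹) * (j (hFun m D ε p) * (j p)⁻¹)) 1 := by
      intro ε hε hεD
      obtain ⟨h, hcoe⟩ := exists_homeo hm0 hmD hD1 hε hεD
      obtain ⟨H, Hcont, HH⟩ := hjF h
      have hH : ∀ x ∈ Set.Icc (0:ℝ) 1, H (j x) = j (hFun m D ε x) := by
        intro x hx
        have := HH ⟨x, hx⟩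
        rwa [hcoe ⟨x, hx⟩] at this
      have hfix : ∀ x, D ≤ x → hFun m D ε x = x := fun x hx => hFun_fix hmD hx
      have hw1 := key_word C j h0 h1 n (hFun m D ε) H hH hfix (hFun_zero hm0) ξ.2
      have hw2 := key_word C j h0 h1 n (hFun m D ε) H hH hfix (hFun_zero hm0) η.2
      rw [← hs₀, ← hpdef] at hw1
      rw [← hs₀, ← hqdef] at hw2
      have hmap : Inseparable (H (zfun C j n ξ) * (zfun C j n ξ)⁻¹)
          (H (zfun C j n η) * (zfun C j n η)⁻¹) :=
        hins.map (Hcont.mul continuous_inv)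
      rw [hw1, hw2] at hmap
      have hconj : Inseparable (j (hFun m D ε p) * (j p)⁻¹) (j (hFun m D ε q) * (j q)⁻¹) := by
        have hcf : Continuous (fun x : G => j 0 * x * (j 0)⁻¹) :=
          (continuous_const.mul continuous_id).mul continuous_const
        have h2 := hmap.map hcf
        have e1 : ∀ u v : G, j 0 * ((j 0)⁻¹ * u * v⁻¹ * j 0) * (j 0)⁻¹ = u * v⁻¹ := by
          intro u v; group
        simpa only [e1] using h2
      have h3 := (Inseparable.refl ((j (hFun m D ε q) * (j q)⁻¹)⁻¹)).mul hconj
      rw [inv_mul_cancel, mul_inv_rev, inv_inv] at h3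
      exact h3
    -- pass to the limit ε → 0
    have hNclosed : IsClosed {x : G | Inseparable x 1} := by
      have hset : {x : G | Inseparable x 1} = closure {1} := by
        ext x
        constructor
        · intro hx
          exact specializes_iff_mem_closure.mp (specializes_iff_inseparable.mpr hx.symm)
        · intro hx
          exact (specializes_iff_inseparable.mp (specializes_iff_mem_closure.mpr hx)).symm
      rw [hset]
      exact isClosed_closure
    set εs : ℕ → ℝ := fun k => D / ((k:ℝ) + 2) with hεs
    have hD0 : 0 < D := hm0.trans hmD
    have hεpos : ∀ k, 0 < εs k := fun k => div_pos hD0 (by positivity)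
    have hεlt : ∀ k, εs k < D := fun k => div_lt_self hD0 (by
      have : (0:ℝ) ≤ (k:ℝ) := Nat.cast_nonneg k
      linarith)
    have hεtend : Tendsto εs atTop (nhds 0) := by
      apply Tendsto.div_atTop tendsto_const_nhds
      exact tendsto_atTop_add_const_right atTop 2 tendsto_natCast_atTop_atTop
    -- the two squeezed sequences converge to 0 within [0,1]
    have hsq : ∀ x : ℝ, 0 ≤ x → x ≤ m →
        Tendsto (fun k => hFun m D (εs k) x) atTop (nhds 0) ∧
          ∀ k, hFun m D (εs k) x ∈ Set.Icc (0:ℝ) 1 := by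
      intro x hx0 hxm
      have hval : ∀ k, hFun m D (εs k) x = εs k / m * x := fun k => hFun_eq1 hxm
      constructor
      · have h : Tendsto (fun k => εs k / m * x) atTop (nhds (0 / m * x)) :=
          (hεtend.div_const m).mul_const x
        rw [zero_div, zero_mul] at h
        exact h.congr fun k => (hval k).symm
      · intro k
        rw [hval k]
        constructor
        · positivity
        · have h1 : εs k / m * x ≤ εs k / m * m :=
            mul_le_mul_of_nonneg_left hxm (by positivity)
          rw [div_mul_cancel₀ _ hm0.ne'] at h1
          exact h1.trans ((hεlt k).le.trans hD1)
    obtain ⟨htp, hmp⟩ := hsq p hp0 hpm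
    obtain ⟨htq, hmq⟩ := hsq q hq0 hqm
    -- j is continuous along these sequences
    have hjcont := hjE.continuous
    have hjten : ∀ (u : ℕ → ℝ) (hu : ∀ k, u k ∈ Set.Icc (0:ℝ) 1),
        Tendsto u atTop (nhds 0) → Tendsto (fun k => j (u k)) atTop (nhds (j 0)) := by
      intro u hu hten
      have h1 : Tendsto (fun k => (⟨u k, hu k⟩ : Set.Icc (0:ℝ) 1)) atTop
          (nhds ⟨0, by norm_num⟩) := by
        rw [tendsto_subtype_rng]
        exact hten
      have h2 := (hjcont.tendsto _).comp h1
      exact h2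
    have hctend : Tendsto
        (fun k => (j q * (j (hFun m D (εs k) q))⁻¹) * (j (hFun m D (εs k) p) * (j p)⁻¹))
        atTop (nhds ((j q * (j 0)⁻¹) * (j 0 * (j p)⁻¹))) := by
      have h1 := hjten _ hmq htq
      have h2 := hjten _ hmp htp
      exact ((tendsto_const_nhds.mul h1.inv).mul (h2.mul tendsto_const_nhds))
    have hclim : ((j q * (j 0)⁻¹) * (j 0 * (j p)⁻¹)) ∈ {x : G | Inseparable x 1} :=
      hNclosed.mem_of_tendsto hctend
        (Filter.Eventually.of_forall fun k => hkey (εs k) (hεpos k) (hεlt k))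
    have hc : Inseparable (j q * (j p)⁻¹) 1 := by
      have e : (j q * (j 0)⁻¹) * (j 0 * (j p)⁻¹) = j q * (j p)⁻¹ := by group
      rw [← e]
      exact hclim
    have hc2 : Inseparable (j q) (j p) := by
      have h4 := hc.mul (Inseparable.refl (j p))
      rwa [inv_mul_cancel_right, one_mul] at h4
    -- contradiction via the embedding j
    have hjq : ((Set.Icc (0:ℝ) 1).restrict j) ⟨q, hqu⟩ = j q := rfl
    have hjp : ((Set.Icc (0:ℝ) 1).restrict j) ⟨p, hpu⟩ = j p := rfl
    have hc3 : Inseparable (⟨q, hqu⟩ : Set.Icc (0:ℝ) 1) ⟨p, hpu⟩ :=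
      (hjE.toIsInducing.inseparable_iff).mp (by rw [hjq, hjp]; exact hc2)
    have : q = p := congrArg Subtype.val hc3.eq
    exact hpq this.symm
  -- conclude: embedding through the separation quotient
  have hemb : IsEmbedding (SeparationQuotient.mk ∘ (Set.Icc (0:ℝ) 1).restrict (C.z j n)) :=
    (Continuous.isClosedEmbedding (SeparationQuotient.continuous_mk.comp hzc) hinj).isEmbedding
  exact IsEmbedding.of_comp hzc SeparationQuotient.continuous_mk hemb
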